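/- Every countably infinite bi-cluster is a p-morphic image of (ℕ,≠) × (ℕ,≠): if (C,R_h,R_v) is a bimodal frame on a countably infinite set C such that c R_h c' and c R_v c' for all distinct c,c', then there is a surjective bimodal p-morphism from the product frame (ℕ,≠) × (ℕ,≠) onto (C,R_h,R_v). -/

import Mathlib

/-- Horizontal relation of the product of two difference frames. -/
def ProdH {U V : Type u} (p q : U × V) : Prop := p.1 ≠ q.1 ∧ p.2 = q.2

/-- Vertical relation of the product of two difference frames. -/
def ProdV {U V : Type u} (p q : U × V) : Prop := p.2 ≠ q.2 ∧ p.1 = q.1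

/-- `f` is a surjective bimodal p-morphism from the product of the difference
frames on `U` and `V` onto the bimodal frame `(C, Rh, Rv)`. -/
def IsBiPMorphism {U V : Type u} {C : Type v} (Rh Rv : C → C → Prop)
    (f : U × V → C) : Prop :=
  Function.Surjective f ∧
  (∀ p q : U × V, ProdH p q → Rh (f p) (f q)) ∧
  (∀ p q : U × V, ProdV p q → Rv (f p) (f q)) ∧
  (∀ (p : U × V) (c : C), Rh (f p) c → ∃ q : U × V, ProdH p q ∧ f q = c) ∧
  (∀ (p : U × V) (c : C), Rv (f p) c → ∃ q : U × V, ProdV p q ∧ f q = c)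


open scoped Classical

noncomputable section S10core

namespace S10

def rho (a : Bool) (x : ℕ) : ℕ := if a then x / 2 else x

lemma rho_sol (a : Bool) (c : ℕ) : rho a (if a then 2*c else c) = c := by
  cases a <;> simp only [rho, if_true, if_false, Bool.false_eq_true] <;> omega

lemma rho_true_eq (x c : ℕ) : rho true x = c ↔ x = 2*c ∨ x = 2*c+1 := by
  simp [rho]; omega

variable (A B : ℕ → Bool) (u : ℕ → ℕ)

/-- membership: value `j` occurs in cell `(s,t)` -/
def Vp (s t j : ℕ) : Prop := rho (A j) s ^^^ rho (B j) t = u j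

lemma exists_s (j t : ℕ) : ∃ s, Vp A B u s t j := by
  refine ⟨if A j then 2*(u j ^^^ rho (B j) t) else (u j ^^^ rho (B j) t), ?_⟩
  unfold Vp
  rw [rho_sol, xor_cancel_right]

lemma exists_t (j s : ℕ) : ∃ t, Vp A B u s t j := by
  refine ⟨if B j then 2*(rho (A j) s ^^^ u j) else (rho (A j) s ^^^ u j), ?_⟩
  unfold Vp
  rw [rho_sol, xor_cancel_left]

lemma exists_two_s (j t s₀ : ℕ) (hA : A j = true) :
    ∃ s, s ≠ s₀ ∧ Vp A B u s t j := by
  set c := u j ^^^ rho (B j) t with hc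
  have h : ∀ s, s/2 = c → Vp A B u s t j := by
    intro s hs
    unfold Vp
    rw [hA, rho, if_pos rfl, hs, hc, xor_cancel_right]
  rcases eq_or_ne (2*c) s₀ with h1 | h1
  · exact ⟨2*c+1, by omega, h _ (by omega)⟩
  · exact ⟨2*c, h1, h _ (by omega)⟩

lemma exists_two_t (j s t₀ : ℕ) (hB : B j = true) :
    ∃ t, t ≠ t₀ ∧ Vp A B u s t j := by
  set c := rho (A j) s ^^^ u j with hc
  have h : ∀ t, t/2 = c → Vp A B u s t j := by
    intro t ht
    unfold Vp
    rw [hB, show rho true t = t/2 from rfl, ht, hc, xor_cancel_left]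
  rcases eq_or_ne (2*c) t₀ with h1 | h1
  · exact ⟨2*c+1, by omega, h _ (by omega)⟩
  · exact ⟨2*c, h1, h _ (by omega)⟩

lemma same_t (s s' t j : ℕ) (h : Vp A B u s t j) (h' : Vp A B u s' t j)
    (hne : s ≠ s') : A j = true := by
  unfold Vp at h h'
  have : rho (A j) s = rho (A j) s' := by
    have := h.trans h'.symm
    exact Nat.xor_left_injective this
  cases hA : A j
  · exfalso; rw [hA] at this; exact hne this
  · rfl

lemma same_s (s t t' j : ℕ) (h : Vp A B u s t j) (h' : Vp A B u s t' j)
    (hne : t ≠ t') : B j = true := by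
  unfold Vp at h h'
  have : rho (B j) t = rho (B j) t' := by
    have h2 := h.trans h'.symm
    exact Nat.xor_right_injective h2
  cases hB : B j
  · exfalso; rw [hB] at this; exact hne this
  · rfl

/-- the value at slot `k` of cell `(s,t)` -/
def phi (k s t : ℕ) : ℕ := Nat.nth (Vp A B u s t) k

lemma phi_mem (hInf : ∀ s t, {j | Vp A B u s t j}.Infinite) (k s t : ℕ) :
    Vp A B u s t (phi A B u k s t) :=
  Nat.nth_mem_of_infinite (hInf s t) k

lemma phi_inj (hInf : ∀ s t, {j | Vp A B u s t j}.Infinite) (s t : ℕ) :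
    Function.Injective (fun k => phi A B u k s t) :=
  Nat.nth_injective (hInf s t)

lemma phi_surj (j s t : ℕ) (h : Vp A B u s t j) : ∃ k, phi A B u k s t = j :=
  ⟨Nat.count (Vp A B u s t) j, Nat.nth_count h⟩

end S10

end S10core

noncomputable section S10main
open scoped Classical
namespace S10

variable {C : Type} [Countable C] [Infinite C] (Rh Rv : C → C → Prop) (E : ℕ ≃ C)

def Ab : ℕ → Bool := fun j => decide (Rh (E j) (E j))
def Bb : ℕ → Bool := fun j => decide (Rv (E j) (E j))

lemma Ab_iff (j : ℕ) : Ab Rh E j = true ↔ Rh (E j) (E j) := decide_eq_true_iff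
lemma Bb_iff (j : ℕ) : Bb Rv E j = true ↔ Rv (E j) (E j) := decide_eq_true_iff

def cls : ℕ → Bool × Bool := fun j => (Ab Rh E j, Bb Rv E j)

def uu : ℕ → ℕ := fun j => (Nat.count (fun i => cls Rh Rv E i = cls Rh Rv E j) j).unpair.1

lemma Hu : ∃ ab : Bool × Bool, ∀ v : ℕ,
    {j | cls Rh Rv E j = ab ∧ uu Rh Rv E j = v}.Infinite := by
  obtain ⟨ab, hab⟩ := Finite.exists_infinite_fiber (cls Rh Rv E)
  have hinf : {i | cls Rh Rv E i = ab}.Infinite := Set.infinite_coe_iff.mp hab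
  refine ⟨ab, fun v => ?_⟩
  have key : ∀ w : ℕ, Nat.nth (fun i => cls Rh Rv E i = ab) (Nat.pair v w) ∈
      {j | cls Rh Rv E j = ab ∧ uu Rh Rv E j = v} := by
    intro w
    have hmem : cls Rh Rv E (Nat.nth (fun i => cls Rh Rv E i = ab) (Nat.pair v w)) = ab :=
      Nat.nth_mem_of_infinite hinf _
    refine ⟨hmem, ?_⟩
    unfold uu
    simp only [hmem]
    rw [Nat.count_nth_of_infinite hinf, Nat.unpair_pair]
  exact Set.infinite_of_injective_forall_mem
    (fun w w' h => (Nat.pair_eq_pair.mp (Nat.nth_injective hinf h)).2) key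

lemma hInf_main : ∀ s t, {j | Vp (Ab Rh E) (Bb Rv E) (uu Rh Rv E) s t j}.Infinite := by
  obtain ⟨⟨a, b⟩, hab⟩ := Hu Rh Rv E
  intro s t
  apply Set.Infinite.mono ?_ (hab (rho a s ^^^ rho b t))
  rintro j ⟨hcls, hu⟩
  have ha : Ab Rh E j = a := (Prod.mk.injEq _ _ _ _ ▸ hcls).1
  have hb : Bb Rv E j = b := (Prod.mk.injEq _ _ _ _ ▸ hcls).2
  simp only [Set.mem_setOf_eq, Vp, ha, hb, hu]

end S10

theorem stmt_10 (C : Type) [Countable C] [Infinite C] (Rh Rv : C → C → Prop)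
    (hbc : ∀ c c' : C, c ≠ c' → Rh c c' ∧ Rv c c') :
    ∃ f : ℕ × ℕ → C, IsBiPMorphism Rh Rv f := by
  classical
  obtain ⟨_⟩ := nonempty_denumerable C
  set E : ℕ ≃ C := (Denumerable.eqv C).symm with hE
  set d : ℕ ≃ ℕ × ℕ := (Denumerable.eqv (ℕ × ℕ)).symm with hd
  set A := S10.Ab Rh E
  set B := S10.Bb Rv E
  set u := S10.uu Rh Rv E
  have hInf := S10.hInf_main Rh Rv E
  set φ := S10.phi A B u with hφ
  set f : ℕ × ℕ → C := fun p =>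
    E (φ ((d p.1).1 ^^^ (d p.2).1) (d p.1).2 (d p.2).2) with hf
  have phi_mem : ∀ k s t, S10.Vp A B u s t (φ k s t) := S10.phi_mem A B u hInf
  have phi_inj : ∀ s t, Function.Injective (fun k => φ k s t) := S10.phi_inj A B u hInf
  have phi_surj : ∀ j s t, S10.Vp A B u s t j → ∃ k, φ k s t = j := S10.phi_surj A B u
  -- value of f at constructed points
  have hval : ∀ r : ℕ × ℕ, f r = E (φ ((d r.1).1 ^^^ (d r.2).1) (d r.1).2 (d r.2).2) := by
    intro r; rw [hf]
  have fval : ∀ (x y : ℕ × ℕ), f (d.symm x, d.symm y) = E (φ (x.1 ^^^ y.1) x.2 y.2) := by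
    intro x y
    rw [hval]; dsimp only; rw [d.apply_symm_apply, d.apply_symm_apply]
  have fvalL : ∀ (x : ℕ × ℕ) (n : ℕ), f (d.symm x, n) = E (φ (x.1 ^^^ (d n).1) x.2 (d n).2) := by
    intro x n
    rw [hval]; dsimp only; rw [d.apply_symm_apply]
  have fvalR : ∀ (m : ℕ) (y : ℕ × ℕ), f (m, d.symm y) = E (φ ((d m).1 ^^^ y.1) (d m).2 y.2) := by
    intro m y
    rw [hval]; dsimp only; rw [d.apply_symm_apply]
  refine ⟨f, ?surj, ?fh, ?fv, ?bh, ?bv⟩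
  case surj =>
    intro c
    set j := E.symm c with hj
    obtain ⟨s, hs⟩ := S10.exists_s A B u j 0
    obtain ⟨k, hk⟩ := phi_surj j s 0 hs
    refine ⟨(d.symm (k, s), d.symm (0, 0)), ?_⟩
    rw [fval (k,s) (0,0)]
    simp only [Nat.xor_zero]
    rw [hk, hj, Equiv.apply_symm_apply]
  case fh =>
    rintro p q ⟨h1, h2⟩
    by_cases hv : f p = f q
    · -- same value: show Rh-reflexive
      rw [hv]
      set j := E.symm (f q) with hj
      have hjq : φ ((d q.1).1 ^^^ (d q.2).1) (d q.1).2 (d q.2).2 = j := by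
        rw [hj, hval q, Equiv.symm_apply_apply]
      have hjp : φ ((d p.1).1 ^^^ (d p.2).1) (d p.1).2 (d p.2).2 = j := by
        rw [hj, ← hv, hval p, Equiv.symm_apply_apply]
      have ht : d p.2 = d q.2 := by rw [h2]
      have hsne : (d p.1).2 ≠ (d q.1).2 := by
        intro hs
        apply h1
        have hk : (d p.1).1 ^^^ (d p.2).1 = (d q.1).1 ^^^ (d q.2).1 := by
          apply phi_inj (d p.1).2 (d p.2).2
          show φ _ _ _ = φ _ _ _
          rw [hjp, hs, ht, hjq]
        rw [ht] at hk
        have : (d p.1).1 = (d q.1).1 := Nat.xor_left_injective hk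
        have : d p.1 = d q.1 := Prod.ext this hs
        exact d.injective this
      have hA : A j = true := by
        apply S10.same_t A B u (d p.1).2 (d q.1).2 (d q.2).2 j _ _ hsne
        · rw [← hjp, ← ht]; exact phi_mem _ _ _
        · rw [← hjq]; exact phi_mem _ _ _
      have := (S10.Ab_iff Rh E j).mp hA
      rwa [hj, Equiv.apply_symm_apply] at this
    · exact (hbc _ _ hv).1
  case fv =>
    rintro p q ⟨h1, h2⟩
    by_cases hv : f p = f q
    · rw [hv]
      set j := E.symm (f q) with hj
      have hjq : φ ((d q.1).1 ^^^ (d q.2).1) (d q.1).2 (d q.2).2 = j := by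
        rw [hj, hval q, Equiv.symm_apply_apply]
      have hjp : φ ((d p.1).1 ^^^ (d p.2).1) (d p.1).2 (d p.2).2 = j := by
        rw [hj, ← hv, hval p, Equiv.symm_apply_apply]
      have hs : d p.1 = d q.1 := by rw [h2]
      have htne : (d p.2).2 ≠ (d q.2).2 := by
        intro ht
        apply h1
        have hk : (d p.1).1 ^^^ (d p.2).1 = (d q.1).1 ^^^ (d q.2).1 := by
          apply phi_inj (d p.1).2 (d p.2).2
          show φ _ _ _ = φ _ _ _
          rw [hjp, hs, ht, hjq]
        rw [hs] at hk
        have : (d p.2).1 = (d q.2).1 := Nat.xor_right_injective hk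
        have : d p.2 = d q.2 := Prod.ext this ht
        exact d.injective this
      have hB : B j = true := by
        apply S10.same_s A B u (d q.1).2 (d p.2).2 (d q.2).2 j _ _ htne
        · rw [← hjp, ← hs]; exact phi_mem _ _ _
        · rw [← hjq]; exact phi_mem _ _ _
      have := (S10.Bb_iff Rv E j).mp hB
      rwa [hj, Equiv.apply_symm_apply] at this
    · exact (hbc _ _ hv).2
  case bh =>
    rintro p c hR
    set j := E.symm c with hj
    set j₀ := E.symm (f p) with hj0
    have hjp : φ ((d p.1).1 ^^^ (d p.2).1) (d p.1).2 (d p.2).2 = j₀ := by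
      rw [hj0, hval p, Equiv.symm_apply_apply]
    by_cases hne : j = j₀
    · -- c = f p ; need Rh-reflexivity
      have hcfp : c = f p := by
        have := congrArg E hne
        rwa [hj, hj0, Equiv.apply_symm_apply, Equiv.apply_symm_apply] at this
      have hA : A j = true := by
        apply (S10.Ab_iff Rh E j).mpr
        rw [hj, Equiv.apply_symm_apply, hcfp]
        rwa [hcfp] at hR
      obtain ⟨s₁, hs₁ne, hs₁⟩ := S10.exists_two_s A B u j (d p.2).2 (d p.1).2 hA
      obtain ⟨k, hk⟩ := phi_surj j s₁ (d p.2).2 hs₁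
      refine ⟨(d.symm (k ^^^ (d p.2).1, s₁), p.2), ⟨?_, rfl⟩, ?_⟩
      · intro hcontra
        apply hs₁ne
        have hc2 : p.1 = d.symm (k ^^^ (d p.2).1, s₁) := hcontra
        have : d p.1 = (k ^^^ (d p.2).1, s₁) := by
          rw [hc2, d.apply_symm_apply]
        rw [this]
      · rw [fvalL (k ^^^ (d p.2).1, s₁) p.2]
        dsimp only
        rw [xor_cancel_right, hk, hj, Equiv.apply_symm_apply]
    · obtain ⟨s₁, hs₁⟩ := S10.exists_s A B u j (d p.2).2
      obtain ⟨k, hk⟩ := phi_surj j s₁ (d p.2).2 hs₁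
      refine ⟨(d.symm (k ^^^ (d p.2).1, s₁), p.2), ⟨?_, rfl⟩, ?_⟩
      · intro hcontra
        apply hne
        have hc2 : p.1 = d.symm (k ^^^ (d p.2).1, s₁) := hcontra
        have hd1 : d p.1 = (k ^^^ (d p.2).1, s₁) := by
          rw [hc2, d.apply_symm_apply]
        have : φ ((d p.1).1 ^^^ (d p.2).1) (d p.1).2 (d p.2).2 = j := by
          rw [hd1]; dsimp only; rwa [xor_cancel_right]
        rw [← this, hjp]
      · rw [fvalL (k ^^^ (d p.2).1, s₁) p.2]
        dsimp only
        rw [xor_cancel_right, hk, hj, Equiv.apply_symm_apply]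
  case bv =>
    rintro p c hR
    set j := E.symm c with hj
    set j₀ := E.symm (f p) with hj0
    have hjp : φ ((d p.1).1 ^^^ (d p.2).1) (d p.1).2 (d p.2).2 = j₀ := by
      rw [hj0, hval p, Equiv.symm_apply_apply]
    by_cases hne : j = j₀
    · have hcfp : c = f p := by
        have := congrArg E hne
        rwa [hj, hj0, Equiv.apply_symm_apply, Equiv.apply_symm_apply] at this
      have hB : B j = true := by
        apply (S10.Bb_iff Rv E j).mpr
        rw [hj, Equiv.apply_symm_apply, hcfp]
        rwa [hcfp] at hR
      obtain ⟨t₁, ht₁ne, ht₁⟩ := S10.exists_two_t A B u j (d p.1).2 (d p.2).2 hB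
      obtain ⟨k, hk⟩ := phi_surj j (d p.1).2 t₁ ht₁
      refine ⟨(p.1, d.symm ((d p.1).1 ^^^ k, t₁)), ⟨?_, rfl⟩, ?_⟩
      · intro hcontra
        apply ht₁ne
        have hc2 : p.2 = d.symm ((d p.1).1 ^^^ k, t₁) := hcontra
        have : d p.2 = ((d p.1).1 ^^^ k, t₁) := by
          rw [hc2, d.apply_symm_apply]
        rw [this]
      · rw [fvalR p.1 ((d p.1).1 ^^^ k, t₁)]
        dsimp only
        rw [xor_cancel_left, hk, hj, Equiv.apply_symm_apply]
    · obtain ⟨t₁, ht₁⟩ := S10.exists_t A B u j (d p.1).2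
      obtain ⟨k, hk⟩ := phi_surj j (d p.1).2 t₁ ht₁
      refine ⟨(p.1, d.symm ((d p.1).1 ^^^ k, t₁)), ⟨?_, rfl⟩, ?_⟩
      · intro hcontra
        apply hne
        have hc2 : p.2 = d.symm ((d p.1).1 ^^^ k, t₁) := hcontra
        have hd2 : d p.2 = ((d p.1).1 ^^^ k, t₁) := by
          rw [hc2, d.apply_symm_apply]
        have : φ ((d p.1).1 ^^^ (d p.2).1) (d p.1).2 (d p.2).2 = j := by
          rw [hd2]; dsimp only; rwa [xor_cancel_left]
        rw [← this, hjp]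
      · rw [fvalR p.1 ((d p.1).1 ^^^ k, t₁)]
        dsimp only
        rw [xor_cancel_left, hk, hj, Equiv.apply_symm_apply]

end S10main
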